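/- For any vertex u of a graph G, ρ(G)² ≤ ρ(G − u)² + 2·d_G(u), where G − u is the graph obtained by deleting u and d_G(u) is the degree of u. -/

import Mathlib

open Matrix Finset SimpleGraph
open scoped Classical

/-- The spectral radius (largest adjacency eigenvalue) of a finite simple graph,
expressed as the supremum of the Rayleigh quotient over unit vectors. -/
noncomputable def specRad {V : Type*} [Fintype V] (G : SimpleGraph V) : ℝ :=
  ⨆ x : {x : V → ℝ // ∑ v, x v ^ 2 = 1},
    dotProduct x.1 ((G.adjMatrix ℝ).mulVec x.1)

section aux

variable {V : Type*} [Fintype V]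

private lemma rayleigh_bdd (G : SimpleGraph V) :
    BddAbove (Set.range fun x : {x : V → ℝ // ∑ v, x v ^ 2 = 1} =>
      dotProduct x.1 ((G.adjMatrix ℝ).mulVec x.1)) := by
  refine ⟨(Fintype.card V : ℝ) ^ 2, ?_⟩
  rintro s ⟨x, rfl⟩
  have hb : ∀ v, |x.1 v| ≤ 1 := by
    intro v
    rw [← sq_le_one_iff_abs_le_one]
    calc x.1 v ^ 2 ≤ ∑ w, x.1 w ^ 2 :=
          Finset.single_le_sum (f := fun w => x.1 w ^ 2) (fun i _ => sq_nonneg _)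
            (Finset.mem_univ v)
      _ = 1 := x.2
  have hterm : ∀ v w : V, x.1 v * ((G.adjMatrix ℝ) v w * x.1 w) ≤ 1 := by
    intro v w
    rw [SimpleGraph.adjMatrix_apply]
    split
    · rw [one_mul]
      calc x.1 v * x.1 w ≤ |x.1 v * x.1 w| := le_abs_self _
        _ = |x.1 v| * |x.1 w| := abs_mul _ _
        _ ≤ 1 * 1 := mul_le_mul (hb v) (hb w) (abs_nonneg _) zero_le_one
        _ = 1 := one_mul 1
    · simp
  calc dotProduct x.1 ((G.adjMatrix ℝ).mulVec x.1)
      = ∑ v, ∑ w, x.1 v * ((G.adjMatrix ℝ) v w * x.1 w) := by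
        simp [dotProduct, Matrix.mulVec, Finset.mul_sum]
    _ ≤ ∑ _v : V, ∑ _w : V, (1 : ℝ) :=
        Finset.sum_le_sum fun v _ => Finset.sum_le_sum fun w _ => hterm v w
    _ = (Fintype.card V : ℝ) ^ 2 := by simp [sq]

private lemma specRad_nonneg (G : SimpleGraph V) (hV : Nonempty V) : 0 ≤ specRad G := by
  obtain ⟨v₀⟩ := hV
  have hx : ∑ v, (fun w => if w = v₀ then (1 : ℝ) else 0) v ^ 2 = 1 := by simp
  have h := le_ciSup (rayleigh_bdd G) ⟨_, hx⟩
  refine le_trans (le_of_eq ?_) h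
  simp only [dotProduct, Matrix.mulVec, ite_mul, mul_ite, one_mul, mul_one,
    zero_mul, mul_zero]
  symm
  refine Finset.sum_eq_zero fun v _ => ?_
  by_cases hv : v = v₀
  · subst hv
    simp
  · simp [hv]

set_option maxHeartbeats 1000000 in
private lemma main_ineq (G : SimpleGraph V) (u : V) :
    specRad G ^ 2 ≤ specRad (G.induce {v | v ≠ u}) ^ 2 + 2 * (G.degree u : ℝ) := by
  have hV : Nonempty V := ⟨u⟩
  haveI hNE : Nonempty {x : V → ℝ // ∑ v, x v ^ 2 = 1} :=
    ⟨⟨fun w => if w = u then 1 else 0, by simp⟩⟩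
  set G' := G.induce {v : V | v ≠ u} with hG'
  set d : ℝ := (G.degree u : ℝ) with hd
  have hd0 : 0 ≤ d := by positivity
  by_cases hE : Nonempty ({v : V | v ≠ u} : Set V)
  · -- main case
    set e : Finset V := Finset.univ.erase u with he
    set A := G.adjMatrix ℝ with hA
    have hdiag : ∀ v, A v v = 0 := by intro v; simp [hA]
    have hsymm : ∀ v w, A v w = A w v := by
      intro v w; simp only [hA, SimpleGraph.adjMatrix_apply]
      simp [G.adj_comm]
    have hA' : ∀ v w : ({v : V | v ≠ u} : Set V), (G'.adjMatrix ℝ) v w = A v.1 w.1 := by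
      intro v w
      simp [hG', hA, SimpleGraph.adjMatrix_apply, SimpleGraph.comap_adj]
    have hconv : ∀ f : V → ℝ, ∑ v ∈ e, f v = ∑ v : ({v : V | v ≠ u} : Set V), f v.1 := by
      intro f
      exact Finset.sum_subtype e (by simp [he]) f
    set r : ℝ := specRad G' with hr
    have hr0 : 0 ≤ r := specRad_nonneg G' hE
    set R : ℝ := Real.sqrt (r ^ 2 + 2 * d) with hR
    have hR0 : 0 ≤ R := Real.sqrt_nonneg _
    have hR2 : R ^ 2 = r ^ 2 + 2 * d := Real.sq_sqrt (by positivity)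
    have main : specRad G ≤ R := by
      rw [specRad]
      apply ciSup_le
      rintro ⟨x, hx⟩
      dsimp only
      set t := x u with ht
      set S := ∑ v ∈ e, A u v * x v with hS
      set s2 := ∑ v ∈ e, x v ^ 2 with hs2
      have hs2nn : 0 ≤ s2 := Finset.sum_nonneg fun i _ => sq_nonneg _
      have hsum : t ^ 2 + s2 = 1 := by
        rw [hs2, ht, ← hx]
        exact Finset.add_sum_erase _ (fun v => x v ^ 2) (Finset.mem_univ u)
      set F : V → V → ℝ := fun v w => x v * (A v w * x w) with hF
      set Q2 : ℝ := ∑ v ∈ e, ∑ w ∈ e, F v w with hQ2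
      -- decomposition
      have hrowu : ∑ w : V, F u w = t * S := by
        rw [← Finset.add_sum_erase _ (F u) (Finset.mem_univ u)]
        rw [show F u u = 0 by simp [hF, hdiag]]
        rw [zero_add, hS, Finset.mul_sum]
      have hcolu : ∑ v ∈ e, F v u = t * S := by
        rw [hS, Finset.mul_sum]
        refine Finset.sum_congr rfl fun v hv => ?_
        simp only [hF, ht, hsymm v u]
        ring
      have hQ : dotProduct x (A.mulVec x) = Q2 + 2 * (t * S) := by
        have step1 : dotProduct x (A.mulVec x) = ∑ v : V, ∑ w : V, F v w := by
          simp [dotProduct, Matrix.mulVec, Finset.mul_sum, hF]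
        rw [step1, ← Finset.add_sum_erase _ (fun v => ∑ w : V, F v w) (Finset.mem_univ u)]
        rw [hrowu]
        have : ∑ v ∈ e, ∑ w : V, F v w = (∑ v ∈ e, F v u) + Q2 := by
          rw [hQ2, ← Finset.sum_add_distrib]
          refine Finset.sum_congr rfl fun v hv => ?_
          exact (Finset.add_sum_erase _ (F v) (Finset.mem_univ u)).symm
        rw [this, hcolu]
        ring
      -- Q2 as subtype Rayleigh quotient numerator
      have hQ2' : Q2 = ∑ v : ({v : V | v ≠ u} : Set V), ∑ w : ({v : V | v ≠ u} : Set V),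
          F v.1 w.1 := by
        rw [hQ2, hconv (fun v => ∑ w ∈ e, F v w)]
        exact Finset.sum_congr rfl fun v _ => hconv (F v.1)
      -- Q2 ≤ r * s2
      have hQ2le : Q2 ≤ r * s2 := by
        rcases eq_or_lt_of_le hs2nn with h0 | hpos
        · have hzero : ∀ v ∈ e, x v = 0 := by
            intro v hv
            have hz := (Finset.sum_eq_zero_iff_of_nonneg
              (fun i _ => sq_nonneg (x i))).mp h0.symm v hv
            exact pow_eq_zero_iff two_ne_zero |>.mp hz
          have hQ20 : Q2 = 0 := by
            rw [hQ2]
            refine Finset.sum_eq_zero fun v hv => Finset.sum_eq_zero fun w hw => ?_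
            simp [hF, hzero v hv]
          rw [hQ20, ← h0, mul_zero]
        · set c : ℝ := (Real.sqrt s2)⁻¹ with hc
          have hcs : c ^ 2 * s2 = 1 := by
            rw [hc, inv_pow, Real.sq_sqrt hs2nn]
            field_simp
          have hc0 : 0 < c ^ 2 := by
            rw [hc, inv_pow]
            positivity
          set z : ({v : V | v ≠ u} : Set V) → ℝ := fun v => c * x v.1 with hz
          have hzunit : ∑ v, z v ^ 2 = 1 := by
            simp only [hz, mul_pow, ← Finset.mul_sum]
            rw [← hconv (fun v => x v ^ 2), ← hs2]
            exact hcs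
          have hle := le_ciSup (rayleigh_bdd G') ⟨z, hzunit⟩
          have hler : dotProduct z ((G'.adjMatrix ℝ).mulVec z) ≤ r := by
            rw [hr, specRad]; exact hle
          have hzQ : dotProduct z ((G'.adjMatrix ℝ).mulVec z) = c ^ 2 * Q2 := by
            have e1 : dotProduct z ((G'.adjMatrix ℝ).mulVec z) =
                ∑ v : ({v : V | v ≠ u} : Set V), ∑ w : ({v : V | v ≠ u} : Set V),
                  z v * ((G'.adjMatrix ℝ) v w * z w) := by
              simp [dotProduct, Matrix.mulVec, Finset.mul_sum]
            rw [e1, hQ2', Finset.mul_sum]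
            refine Finset.sum_congr rfl fun v _ => ?_
            rw [Finset.mul_sum]
            refine Finset.sum_congr rfl fun w _ => ?_
            rw [hA' v w]
            simp only [hz, hF]
            ring
          rw [hzQ] at hler
          have key : 0 ≤ (r - c ^ 2 * Q2) * s2 := mul_nonneg (sub_nonneg.mpr hler) hs2nn
          have keq : (r - c ^ 2 * Q2) * s2 = r * s2 - Q2 * (c ^ 2 * s2) := by ring
          rw [keq, hcs, mul_one] at key
          linarith
      -- S bound
      have hSsq : S ^ 2 ≤ d * s2 := by
        have cs := Finset.sum_mul_sq_le_sq_mul_sq e (fun v => A u v) (fun v => x v)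
        have h1 : ∑ v ∈ e, (A u v) ^ 2 = d := by
          have : ∀ v ∈ e, (A u v) ^ 2 = A u v := by
            intro v _
            simp only [hA, SimpleGraph.adjMatrix_apply]
            split <;> norm_num
          rw [Finset.sum_congr rfl this, Finset.sum_erase _ (hdiag u)]
          rw [hd, ← SimpleGraph.card_neighborFinset_eq_degree,
            SimpleGraph.neighborFinset_eq_filter]
          simp [hA, SimpleGraph.adjMatrix_apply, Finset.sum_boole]
        rw [hS]
        calc (∑ v ∈ e, A u v * x v) ^ 2 ≤ (∑ v ∈ e, (A u v) ^ 2) * ∑ v ∈ e, x v ^ 2 := cs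
          _ = d * s2 := by rw [h1, hs2]
      -- final arithmetic
      set w : ℝ := Real.sqrt s2 with hwdef
      set q : ℝ := Real.sqrt d with hqdef
      have hw2 : w ^ 2 = s2 := Real.sq_sqrt hs2nn
      have hq2 : q ^ 2 = d := Real.sq_sqrt hd0
      have hw0 : 0 ≤ w := Real.sqrt_nonneg _
      have hq0 : 0 ≤ q := Real.sqrt_nonneg _
      have hT0 : 0 ≤ |t| := abs_nonneg t
      have hTt : |t| ^ 2 = t ^ 2 := sq_abs t
      have hSle : |S| ≤ q * w := by
        have h2 : S ^ 2 ≤ (q * w) ^ 2 := by rw [mul_pow, hq2, hw2]; exact hSsq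
        calc |S| = Real.sqrt (S ^ 2) := (Real.sqrt_sq_eq_abs S).symm
          _ ≤ Real.sqrt ((q * w) ^ 2) := Real.sqrt_le_sqrt h2
          _ = |q * w| := Real.sqrt_sq_eq_abs _
          _ = q * w := abs_of_nonneg (mul_nonneg hq0 hw0)
      have htS : t * S ≤ |t| * (q * w) := by
        calc t * S ≤ |t * S| := le_abs_self _
          _ = |t| * |S| := abs_mul _ _
          _ ≤ |t| * (q * w) := mul_le_mul_of_nonneg_left hSle hT0
      have hB : dotProduct x (A.mulVec x) ≤ r * w ^ 2 + 2 * (|t| * (q * w)) := by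
        rw [hQ, hw2]
        linarith [hQ2le, htS]
      have hB0 : 0 ≤ r * w ^ 2 + 2 * (|t| * (q * w)) := by positivity
      have h1 : w ^ 2 + |t| ^ 2 = 1 := by rw [hw2, hTt]; linarith [hsum]
      have hgap : r ^ 2 + 2 * q ^ 2 - (r * w ^ 2 + 2 * (|t| * (q * w))) ^ 2
          = (r ^ 2 + 2 * q ^ 2) * |t| ^ 4 + 2 * (r * |t| * w - q * w ^ 2) ^ 2 := by
        linear_combination (-(r ^ 2 + 2 * q ^ 2) * (1 + w ^ 2 + |t| ^ 2)) * h1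
      have hB2 : (r * w ^ 2 + 2 * (|t| * (q * w))) ^ 2 ≤ R ^ 2 := by
        rw [hR2, ← hq2]
        have p1 : 0 ≤ (r ^ 2 + 2 * q ^ 2) * |t| ^ 4 := by positivity
        have p2 : 0 ≤ 2 * (r * |t| * w - q * w ^ 2) ^ 2 := by positivity
        linarith [hgap, p1, p2]
      have hBR : r * w ^ 2 + 2 * (|t| * (q * w)) ≤ R := by
        have h3 : Real.sqrt ((r * w ^ 2 + 2 * (|t| * (q * w))) ^ 2) ≤ Real.sqrt (R ^ 2) :=
          Real.sqrt_le_sqrt hB2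
        rwa [Real.sqrt_sq hB0, Real.sqrt_sq hR0] at h3
      exact le_trans hB hBR
    have h0' : 0 ≤ specRad G := specRad_nonneg G hV
    calc specRad G ^ 2 ≤ R ^ 2 := pow_le_pow_left₀ h0' main 2
      _ = r ^ 2 + 2 * d := hR2
  · -- degenerate case: V = {u}
    have hall : ∀ v : V, v = u := by
      intro v
      by_contra h
      exact hE ⟨⟨v, h⟩⟩
    have hA0 : ∀ v w : V, (G.adjMatrix ℝ) v w = 0 := by
      intro v w
      rw [hall v, hall w]
      simp
    have h0 : specRad G ≤ 0 := by
      rw [specRad]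
      apply ciSup_le
      intro x
      have hnadj : ∀ v w : V, ¬ G.Adj v w := by
        intro v w
        rw [hall v, hall w]
        exact G.irrefl
      simp [dotProduct, Matrix.mulVec, hnadj]
    have h0' : 0 ≤ specRad G := specRad_nonneg G hV
    have hG0 : specRad G = 0 := le_antisymm h0 h0'
    rw [hG0]
    have : (0:ℝ) ^ 2 = 0 := by norm_num
    rw [this]
    positivity

end aux

/-- Deleting a vertex: ρ(G)² ≤ ρ(G − u)² + 2·d_G(u). -/
theorem stmt1 {V : Type*} [Fintype V] (G : SimpleGraph V) [DecidableRel G.Adj] (u : V) :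
    specRad G ^ 2 ≤ specRad (G.induce {v | v ≠ u}) ^ 2 + 2 * (G.degree u : ℝ) := by
  have h := main_ineq G u
  convert h using 4
  congr!
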